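/- Fix integers m, d ≥ 1 and α ∈ (0,1]. Let X be the set of continuous maps f : ℝ^m → ℝ^d such that [f]_{α,K} < ∞ for every compact set K ⊆ ℝ^m. Then X, endowed with the weak α-Hölder–Whitney topology, is a Baire space. -/

import Mathlib

open TopologicalSpace Set
open scoped ENNReal

noncomputable section

/-- Euclidean space `ℝ^n`. -/
abbrev Euc (n : ℕ) : Type := EuclideanSpace ℝ (Fin n)

/-- The `α`-Hölder seminorm of `f` over the set `A`, valued in `[0,∞]`:
`[f]_{α,A} = sup { ‖f x − f y‖ / ‖x − y‖^α : x, y ∈ A, x ≠ y }`. -/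
noncomputable def holderSemi {E F : Type*} [NormedAddCommGroup E] [NormedAddCommGroup F]
    (α : ℝ) (A : Set E) (f : E → F) : ℝ≥0∞ :=
  ⨆ (x) (_ : x ∈ A) (y) (_ : y ∈ A) (_ : x ≠ y),
    ENNReal.ofReal (‖f x - f y‖ / ‖x - y‖ ^ α)

/-- The sup-norm `‖f‖_{C⁰(A)} = sup_{x ∈ A} ‖f x‖`, valued in `[0,∞]`. -/
noncomputable def supNormOn {E F : Type*} [NormedAddCommGroup E] [NormedAddCommGroup F]
    (A : Set E) (f : E → F) : ℝ≥0∞ :=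
  ⨆ (x) (_ : x ∈ A), ENNReal.ofReal ‖f x‖

/-- The `α`-Hölder norm `‖f‖_{α,A} = ‖f‖_{C⁰(A)} + [f]_{α,A}`. -/
noncomputable def holderNorm {E F : Type*} [NormedAddCommGroup E] [NormedAddCommGroup F]
    (α : ℝ) (A : Set E) (f : E → F) : ℝ≥0∞ :=
  supNormOn A f + holderSemi α A f

/-- Continuous maps `ℝ^m → ℝ^d` with finite `α`-Hölder seminorm on every compact set. -/
abbrev HolderMap (m d : ℕ) (α : ℝ) : Type :=
  {f : Euc m → Euc d // Continuous f ∧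
    ∀ K : Set (Euc m), IsCompact K → holderSemi α K f < ⊤}

/-- Generating sets `N_s(f; {K_t}, {ε_t})` of the strong `α`-Hölder–Whitney topology:
indexed by a locally finite family of compact sets `K_t` and extended positive reals `ε_t`. -/
def strongBasic (m d : ℕ) (α : ℝ) : Set (Set (HolderMap m d α)) :=
  { S | ∃ (T : Type) (K : T → Set (Euc m)) (ε : T → ℝ≥0∞) (f : HolderMap m d α),
      (∀ t, IsCompact (K t)) ∧ LocallyFinite K ∧ (∀ t, 0 < ε t) ∧
      S = { g | ∀ t, holderNorm α (K t) (f.1 - g.1) < ε t } }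

/-- Generating sets `N(f; K, ε)` of the weak `α`-Hölder–Whitney topology. -/
def weakBasic (m d : ℕ) (α : ℝ) : Set (Set (HolderMap m d α)) :=
  { S | ∃ (f : HolderMap m d α) (K : Set (Euc m)) (ε : ℝ), IsCompact K ∧ 0 < ε ∧
      S = { g | holderNorm α K (f.1 - g.1) < ENNReal.ofReal ε } }

/-! ### Auxiliary lemmas about the Hölder norm -/

section NormLemmas

variable {E F : Type*} [NormedAddCommGroup E] [NormedAddCommGroup F] {α : ℝ}
  {A B : Set E} {f g : E → F}

theorem le_holderSemi {x y : E} (hx : x ∈ A) (hy : y ∈ A) (hxy : x ≠ y) :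
    ENNReal.ofReal (‖f x - f y‖ / ‖x - y‖ ^ α) ≤ holderSemi α A f :=
  le_iSup_of_le x <| le_iSup_of_le hx <| le_iSup_of_le y <| le_iSup_of_le hy <|
    le_iSup_of_le hxy le_rfl

theorem le_supNormOn {x : E} (hx : x ∈ A) :
    ENNReal.ofReal ‖f x‖ ≤ supNormOn A f :=
  le_iSup_of_le x <| le_iSup_of_le hx le_rfl

theorem holderSemi_le_iff {c : ℝ≥0∞} :
    holderSemi α A f ≤ c ↔
      ∀ x ∈ A, ∀ y ∈ A, x ≠ y → ENNReal.ofReal (‖f x - f y‖ / ‖x - y‖ ^ α) ≤ c := by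
  simp [holderSemi, iSup_le_iff]

theorem supNormOn_le_iff {c : ℝ≥0∞} :
    supNormOn A f ≤ c ↔ ∀ x ∈ A, ENNReal.ofReal ‖f x‖ ≤ c := by
  simp [supNormOn, iSup_le_iff]

theorem supNormOn_mono (hAB : A ⊆ B) : supNormOn A f ≤ supNormOn B f :=
  supNormOn_le_iff.2 fun x hx => le_supNormOn (hAB hx)

theorem holderSemi_mono (hAB : A ⊆ B) : holderSemi α A f ≤ holderSemi α B f :=
  holderSemi_le_iff.2 fun x hx y hy hxy => le_holderSemi (hAB hx) (hAB hy) hxy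

theorem holderNorm_mono (hAB : A ⊆ B) : holderNorm α A f ≤ holderNorm α B f :=
  add_le_add (supNormOn_mono hAB) (holderSemi_mono hAB)

theorem supNormOn_le_holderNorm : supNormOn A f ≤ holderNorm α A f :=
  le_add_of_nonneg_right zero_le

theorem holderSemi_le_holderNorm : holderSemi α A f ≤ holderNorm α A f :=
  le_add_of_nonneg_left zero_le

theorem holderNorm_zero : holderNorm α A (0 : E → F) = 0 := by
  simp [holderNorm, supNormOn, holderSemi]

theorem supNormOn_add_le : supNormOn A (f + g) ≤ supNormOn A f + supNormOn A g := by
  refine supNormOn_le_iff.2 fun x hx => ?_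
  calc ENNReal.ofReal ‖(f + g) x‖ ≤ ENNReal.ofReal (‖f x‖ + ‖g x‖) := by
        exact ENNReal.ofReal_le_ofReal (norm_add_le _ _)
    _ ≤ ENNReal.ofReal ‖f x‖ + ENNReal.ofReal ‖g x‖ := ENNReal.ofReal_add_le
    _ ≤ _ := add_le_add (le_supNormOn hx) (le_supNormOn hx)

theorem holderSemi_add_le : holderSemi α A (f + g) ≤ holderSemi α A f + holderSemi α A g := by
  refine holderSemi_le_iff.2 fun x hx y hy hxy => ?_
  have h1 : ‖(f + g) x - (f + g) y‖ ≤ ‖f x - f y‖ + ‖g x - g y‖ := by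
    have := norm_add_le (f x - f y) (g x - g y)
    simpa [Pi.add_apply, sub_add_sub_comm] using this
  have hp : (0:ℝ) < ‖x - y‖ ^ α := Real.rpow_pos_of_pos (by simpa [sub_eq_zero] using hxy) _
  calc ENNReal.ofReal (‖(f + g) x - (f + g) y‖ / ‖x - y‖ ^ α)
      ≤ ENNReal.ofReal ((‖f x - f y‖ + ‖g x - g y‖) / ‖x - y‖ ^ α) :=
        ENNReal.ofReal_le_ofReal ((div_le_div_iff_of_pos_right hp).2 h1)
    _ = ENNReal.ofReal (‖f x - f y‖ / ‖x - y‖ ^ α + ‖g x - g y‖ / ‖x - y‖ ^ α) := by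
        rw [add_div]
    _ ≤ ENNReal.ofReal (‖f x - f y‖ / ‖x - y‖ ^ α)
        + ENNReal.ofReal (‖g x - g y‖ / ‖x - y‖ ^ α) := ENNReal.ofReal_add_le
    _ ≤ _ := add_le_add (le_holderSemi hx hy hxy) (le_holderSemi hx hy hxy)

theorem holderNorm_add_le : holderNorm α A (f + g) ≤ holderNorm α A f + holderNorm α A g := by
  calc holderNorm α A (f + g) ≤ (supNormOn A f + supNormOn A g)
        + (holderSemi α A f + holderSemi α A g) := add_le_add supNormOn_add_le holderSemi_add_le
    _ = _ := by unfold holderNorm; ring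

theorem holderNorm_neg : holderNorm α A (-f) = holderNorm α A f := by
  have h1 : supNormOn A (-f) = supNormOn A f := by
    unfold supNormOn; simp
  have h2 : holderSemi α A (-f) = holderSemi α A f := by
    unfold holderSemi
    refine iSup_congr fun x => iSup_congr fun _ => iSup_congr fun y =>
      iSup_congr fun _ => iSup_congr fun _ => ?_
    congr 1
    rw [show (-f) x - (-f) y = -(f x - f y) by simp [neg_sub]; abel, norm_neg]
  unfold holderNorm; rw [h1, h2]

theorem holderNorm_sub_comm : holderNorm α A (f - g) = holderNorm α A (g - f) := by
  rw [← holderNorm_neg (f := g - f), neg_sub]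

end NormLemmas

/-! ### The pseudo-emetric -/

section Metric

variable (m d : ℕ) (α : ℝ)

/-- Closed ball of radius `n` in `ℝ^m`. -/
def Bn (m : ℕ) (n : ℕ) : Set (Euc m) := Metric.closedBall 0 (n : ℝ)

theorem Bn_mono {k n : ℕ} (h : k ≤ n) : Bn m k ⊆ Bn m n :=
  Metric.closedBall_subset_closedBall (by exact_mod_cast h)

/-- The candidate distance. -/
def hdist (u v : HolderMap m d α) : ℝ≥0∞ :=
  ∑' n : ℕ, 2⁻¹ ^ n * min 1 (holderNorm α (Bn m n) (u.1 - v.1))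

theorem tsum_geom_inv_two : ∑' n : ℕ, ((2:ℝ≥0∞)⁻¹) ^ n = 2 := by
  rw [ENNReal.tsum_geometric, ENNReal.one_sub_inv_two, inv_inv]

theorem hdist_le_two (u v : HolderMap m d α) : hdist m d α u v ≤ 2 := by
  rw [← tsum_geom_inv_two]
  exact ENNReal.tsum_le_tsum fun n => by
    calc 2⁻¹ ^ n * min 1 (holderNorm α (Bn m n) (u.1 - v.1)) ≤ 2⁻¹ ^ n * 1 :=
          mul_le_mul_right (min_le_left _ _) _
      _ = 2⁻¹ ^ n := mul_one _

theorem min1_subadd {a b c : ℝ≥0∞} (h : a ≤ b + c) : min 1 a ≤ min 1 b + min 1 c := by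
  rcases le_or_gt 1 b with hb | hb
  · calc min 1 a ≤ 1 := min_le_left _ _
      _ = min 1 b := by rw [min_eq_left hb]
      _ ≤ _ := le_add_of_nonneg_right zero_le
  rcases le_or_gt 1 c with hc | hc
  · calc min 1 a ≤ 1 := min_le_left _ _
      _ = min 1 c := by rw [min_eq_left hc]
      _ ≤ _ := le_add_of_nonneg_left zero_le
  · rw [min_eq_right hb.le, min_eq_right hc.le]
    exact le_trans (min_le_right _ _) h

/-- The pseudo-extended-metric structure. -/
def holderEMetric : PseudoEMetricSpace (HolderMap m d α) where
  edist := hdist m d α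
  edist_self u := by
    simp [hdist, sub_self, holderNorm_zero]
  edist_comm u v := by
    unfold hdist
    exact tsum_congr fun n => by rw [holderNorm_sub_comm]
  edist_triangle u v w := by
    show hdist m d α u w ≤ hdist m d α u v + hdist m d α v w
    unfold hdist
    rw [← ENNReal.tsum_add]
    refine ENNReal.tsum_le_tsum fun n => ?_
    rw [← mul_add]
    refine mul_le_mul_right ?_ _
    refine min1_subadd ?_
    have : u.1 - w.1 = (u.1 - v.1) + (v.1 - w.1) := by abel
    rw [this]
    exact holderNorm_add_le

theorem holderNorm_lt_of_hdist_lt {u v : HolderMap m d α} {n : ℕ} {ε : ℝ≥0∞}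
    (hε1 : ε ≤ 1) (h : hdist m d α u v < 2⁻¹ ^ n * ε) :
    holderNorm α (Bn m n) (u.1 - v.1) < ε := by
  set H := holderNorm α (Bn m n) (u.1 - v.1)
  have hterm : 2⁻¹ ^ n * min 1 H ≤ hdist m d α u v := ENNReal.le_tsum n
  have h2 : (2:ℝ≥0∞)⁻¹ ^ n * min 1 H < 2⁻¹ ^ n * ε := lt_of_le_of_lt hterm h
  have hpow0 : ((2:ℝ≥0∞)⁻¹) ^ n ≠ 0 := by
    simp [pow_eq_zero_iff]
  have hpowt : ((2:ℝ≥0∞)⁻¹) ^ n ≠ ⊤ := by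
    exact ENNReal.pow_ne_top (by simp)
  have hmin : min 1 H < ε := (ENNReal.mul_lt_mul_iff_right hpow0 hpowt).1 h2
  have hH1 : H < 1 := by
    by_contra hcon
    push_neg at hcon
    rw [min_eq_left hcon] at hmin
    exact absurd (lt_of_lt_of_le hmin hε1) (lt_irrefl _)
  rwa [min_eq_right hH1.le] at hmin

theorem hdist_le_of_holderNorm_le {u v : HolderMap m d α} {n₀ : ℕ} {δ : ℝ≥0∞}
    (h : holderNorm α (Bn m n₀) (u.1 - v.1) ≤ δ) :
    hdist m d α u v ≤ 2 * δ + 2⁻¹ ^ n₀ * 2 := by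
  have hbound : ∀ k : ℕ, 2⁻¹ ^ k * min 1 (holderNorm α (Bn m k) (u.1 - v.1))
      ≤ 2⁻¹ ^ k * δ + (if n₀ ≤ k then ((2:ℝ≥0∞)⁻¹) ^ k else 0) := by
    intro k
    rcases le_or_gt n₀ k with hk | hk
    · rw [if_pos hk]
      calc 2⁻¹ ^ k * min 1 (holderNorm α (Bn m k) (u.1 - v.1)) ≤ 2⁻¹ ^ k * 1 :=
            mul_le_mul_right (min_le_left _ _) _
        _ = 2⁻¹ ^ k := mul_one _
        _ ≤ _ := le_add_of_nonneg_left zero_le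
    · rw [if_neg (not_le.2 hk)]
      have : holderNorm α (Bn m k) (u.1 - v.1) ≤ δ :=
        le_trans (holderNorm_mono (Bn_mono m hk.le)) h
      calc 2⁻¹ ^ k * min 1 (holderNorm α (Bn m k) (u.1 - v.1))
          ≤ 2⁻¹ ^ k * δ := mul_le_mul_right (le_trans (min_le_right _ _) this) _
        _ ≤ _ := by simp
  calc hdist m d α u v
      ≤ ∑' k : ℕ, (2⁻¹ ^ k * δ + (if n₀ ≤ k then ((2:ℝ≥0∞)⁻¹) ^ k else 0)) :=
        ENNReal.tsum_le_tsum hbound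
    _ = (∑' k : ℕ, 2⁻¹ ^ k * δ) + ∑' k : ℕ, (if n₀ ≤ k then ((2:ℝ≥0∞)⁻¹) ^ k else 0) :=
        ENNReal.tsum_add
    _ = 2 * δ + 2⁻¹ ^ n₀ * 2 := by
        congr 1
        · rw [ENNReal.tsum_mul_right, tsum_geom_inv_two, mul_comm]
        · have hinj : Function.Injective (fun k : ℕ => k + n₀) := fun a b h => by simpa using h
          have hsupp : Function.support (fun k => if n₀ ≤ k then ((2:ℝ≥0∞)⁻¹) ^ k else 0)
              ⊆ Set.range (fun k : ℕ => k + n₀) := by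
            intro k hk
            by_cases h : n₀ ≤ k
            · exact ⟨k - n₀, by simp; omega⟩
            · simp [Function.mem_support, if_neg h] at hk
          rw [← hinj.tsum_eq hsupp]
          have h2 : ∀ k : ℕ, (if n₀ ≤ k + n₀ then ((2:ℝ≥0∞)⁻¹) ^ (k + n₀) else 0)
              = 2⁻¹ ^ n₀ * 2⁻¹ ^ k := by
            intro k
            rw [if_pos (Nat.le_add_left _ _), pow_add, mul_comm]
          calc ∑' (k : ℕ), (if n₀ ≤ k + n₀ then ((2:ℝ≥0∞)⁻¹) ^ (k + n₀) else 0)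
              = ∑' (k : ℕ), 2⁻¹ ^ n₀ * 2⁻¹ ^ k := tsum_congr h2
            _ = 2⁻¹ ^ n₀ * 2 := by rw [ENNReal.tsum_mul_left, tsum_geom_inv_two]

end Metric

/-! ### Topology identification -/

section Topology

variable (m d : ℕ) (α : ℝ)

theorem exists_nat_subset_Bn {K : Set (Euc m)} (hK : IsCompact K) : ∃ n : ℕ, K ⊆ Bn m n := by
  obtain ⟨r, hr⟩ := hK.isBounded.subset_closedBall (0 : Euc m)
  refine ⟨⌈max r 0⌉₊, hr.trans (Metric.closedBall_subset_closedBall ?_)⟩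
  exact le_trans (le_max_left r 0) (Nat.le_ceil _)

theorem isCompact_Bn (n : ℕ) : IsCompact (Bn m n) := isCompact_closedBall _ _

/-- The key smallness criterion for `hdist`. -/
theorem exists_n_delta {ε : ℝ≥0∞} (hε : 0 < ε) :
    ∃ (n₀ : ℕ) (δ : ℝ), 0 < δ ∧ δ ≤ 1 ∧
      ∀ u v : HolderMap m d α,
        holderNorm α (Bn m n₀) (u.1 - v.1) ≤ ENNReal.ofReal (2 * δ) →
          hdist m d α u v < ε := by
  set ε' : ℝ≥0∞ := min ε 1 with hε'
  have hε'0 : 0 < ε' := lt_min hε one_pos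
  have hε't : ε' ≠ ⊤ := ne_top_of_le_ne_top ENNReal.one_ne_top (min_le_right _ _)
  set e₀ : ℝ := ε'.toReal with he₀
  have he₀pos : 0 < e₀ := ENNReal.toReal_pos hε'0.ne' hε't
  have he₀le : e₀ ≤ 1 := by
    rw [he₀, ← ENNReal.toReal_one]
    exact ENNReal.toReal_mono ENNReal.one_ne_top (min_le_right _ _)
  -- choose n₀ with 2⁻¹ ^ n₀ < ofReal (e₀ / 4)
  have htend : Filter.Tendsto (fun n : ℕ => ((2:ℝ≥0∞)⁻¹) ^ n) Filter.atTop (nhds 0) :=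
    ENNReal.tendsto_pow_atTop_nhds_zero_of_lt_one (by simp [ENNReal.inv_lt_one])
  have hev : ∀ᶠ n in Filter.atTop, ((2:ℝ≥0∞)⁻¹) ^ n < ENNReal.ofReal (e₀ / 4) :=
    htend.eventually (gt_mem_nhds (by positivity))
  obtain ⟨n₀, hn₀⟩ := hev.exists
  refine ⟨n₀, e₀ / 8, by positivity, by linarith, fun u v hle => ?_⟩
  have h2δ : (2 : ℝ) * (e₀ / 8) = e₀ / 4 := by ring
  rw [h2δ] at hle
  have htail : ((2:ℝ≥0∞)⁻¹) ^ n₀ * 2 < ENNReal.ofReal (e₀ / 2) := by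
    calc ((2:ℝ≥0∞)⁻¹) ^ n₀ * 2 < ENNReal.ofReal (e₀ / 4) * 2 :=
          ENNReal.mul_lt_mul_left two_ne_zero ENNReal.ofNat_ne_top hn₀
      _ = ENNReal.ofReal (e₀ / 4) + ENNReal.ofReal (e₀ / 4) := by rw [mul_two]
      _ = ENNReal.ofReal (e₀ / 2) := by
          rw [← ENNReal.ofReal_add (by positivity) (by positivity)]
          congr 1; ring
  have hmain : 2 * ENNReal.ofReal (e₀ / 4) = ENNReal.ofReal (e₀ / 2) := by
    rw [two_mul, ← ENNReal.ofReal_add (by positivity) (by positivity)]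
    congr 1; ring
  calc hdist m d α u v ≤ 2 * ENNReal.ofReal (e₀ / 4) + 2⁻¹ ^ n₀ * 2 :=
        hdist_le_of_holderNorm_le m d α hle
    _ = ENNReal.ofReal (e₀ / 2) + 2⁻¹ ^ n₀ * 2 := by rw [hmain]
    _ < ENNReal.ofReal (e₀ / 2) + ENNReal.ofReal (e₀ / 2) :=
        ENNReal.add_lt_add_left ENNReal.ofReal_ne_top htail
    _ = ENNReal.ofReal e₀ := by
        rw [← ENNReal.ofReal_add (by positivity) (by positivity)]; congr 1; ring
    _ = ε' := ENNReal.ofReal_toReal hε't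
    _ ≤ ε := min_le_left _ _

/-- Every weak basic set is open for the pseudo-emetric. -/
theorem weakBasic_isOpen {S : Set (HolderMap m d α)} (hS : S ∈ weakBasic m d α) :
    @IsOpen _ (holderEMetric m d α).toUniformSpace.toTopologicalSpace S := by
  letI : PseudoEMetricSpace (HolderMap m d α) := holderEMetric m d α
  obtain ⟨f, K, ε, hK, hε, rfl⟩ := hS
  rw [EMetric.isOpen_iff]
  intro g hg
  simp only [Set.mem_setOf_eq] at hg
  set c := holderNorm α K (f.1 - g.1) with hc
  have hct : c ≠ ⊤ := ne_top_of_lt hg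
  have hcr : c.toReal < ε := by
    have := ENNReal.toReal_strict_mono (by simp [ENNReal.ofReal_ne_top]) hg
    rwa [ENNReal.toReal_ofReal hε.le] at this
  set δ : ℝ := min ((ε - c.toReal) / 2) 1 with hδ
  have hδpos : 0 < δ := lt_min (by linarith) one_pos
  have hδ1 : δ ≤ 1 := min_le_right _ _
  obtain ⟨n, hn⟩ := exists_nat_subset_Bn m hK
  refine ⟨2⁻¹ ^ n * ENNReal.ofReal δ, ?_, ?_⟩
  · exact ENNReal.mul_pos (by simp) (by simp [ENNReal.ofReal_pos, hδpos])
  · intro h hh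
    rw [EMetric.mem_ball] at hh
    have hh' : hdist m d α h g < 2⁻¹ ^ n * ENNReal.ofReal δ := hh
    have h1 : holderNorm α (Bn m n) (h.1 - g.1) < ENNReal.ofReal δ :=
      holderNorm_lt_of_hdist_lt m d α (by
        calc ENNReal.ofReal δ ≤ ENNReal.ofReal 1 := ENNReal.ofReal_le_ofReal hδ1
          _ = 1 := ENNReal.ofReal_one) hh'
    have h2 : holderNorm α K (g.1 - h.1) < ENNReal.ofReal δ := by
      rw [holderNorm_sub_comm]
      exact lt_of_le_of_lt (holderNorm_mono hn) h1
    have h3 : holderNorm α K (f.1 - h.1) < c + ENNReal.ofReal δ := by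
      have heq : f.1 - h.1 = (f.1 - g.1) + (g.1 - h.1) := by abel
      calc holderNorm α K (f.1 - h.1)
          ≤ holderNorm α K (f.1 - g.1) + holderNorm α K (g.1 - h.1) := by
            rw [heq]; exact holderNorm_add_le
        _ < c + ENNReal.ofReal δ := by
            exact ENNReal.add_lt_add_of_le_of_lt hct le_rfl h2
    have h4 : c + ENNReal.ofReal δ < ENNReal.ofReal ε := by
      rw [← ENNReal.ofReal_toReal hct, ← ENNReal.ofReal_add ENNReal.toReal_nonneg hδpos.le]
      apply ENNReal.ofReal_lt_ofReal_iff_of_nonneg (by positivity) |>.2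
      have : δ ≤ (ε - c.toReal) / 2 := min_le_left _ _
      linarith
    exact lt_trans h3 h4

/-- Every emetric ball contains a weak basic set around each of its centers. -/
theorem exists_weakBasic_subset_ball (f : HolderMap m d α) {ε : ℝ≥0∞} (hε : 0 < ε) :
    ∃ S ∈ weakBasic m d α, f ∈ S ∧
      S ⊆ {g : HolderMap m d α | hdist m d α g f < ε} := by
  obtain ⟨n₀, δ, hδpos, hδ1, hkey⟩ := exists_n_delta m d α hε
  refine ⟨{g | holderNorm α (Bn m n₀) (f.1 - g.1) < ENNReal.ofReal δ},
    ⟨f, Bn m n₀, δ, isCompact_Bn m n₀, hδpos, rfl⟩, ?_, ?_⟩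
  · simp only [Set.mem_setOf_eq, sub_self, holderNorm_zero]
    simp [ENNReal.ofReal_pos, hδpos]
  · intro g hg
    simp only [Set.mem_setOf_eq] at hg ⊢
    have hle : holderNorm α (Bn m n₀) (g.1 - f.1) ≤ ENNReal.ofReal (2 * δ) := by
      rw [holderNorm_sub_comm]
      exact le_trans hg.le (ENNReal.ofReal_le_ofReal (by linarith))
    exact hkey g f hle

theorem topEq :
    generateFrom (weakBasic m d α) =
      (holderEMetric m d α).toUniformSpace.toTopologicalSpace := by
  letI : PseudoEMetricSpace (HolderMap m d α) := holderEMetric m d α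
  apply le_antisymm
  · -- generateFrom ≤ emetric topology: every emetric-open set is generated-open
    rw [TopologicalSpace.le_def]
    intro U hU
    have hU' : ∀ f ∈ U, ∃ ε > 0, EMetric.ball f ε ⊆ U := EMetric.isOpen_iff.1 hU
    have hrepr : U = ⋃₀ {S | S ∈ weakBasic m d α ∧ S ⊆ U} := by
      apply Set.Subset.antisymm
      · intro f hf
        obtain ⟨ε, hε, hball⟩ := hU' f hf
        obtain ⟨S, hS, hfS, hSsub⟩ := exists_weakBasic_subset_ball m d α f hε
        exact ⟨S, ⟨hS, fun g hgS => hball (hSsub hgS)⟩, hfS⟩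
      · rintro f ⟨S, ⟨-, hSU⟩, hfS⟩
        exact hSU hfS
    rw [hrepr]
    exact TopologicalSpace.GenerateOpen.sUnion _ fun S hS =>
      TopologicalSpace.GenerateOpen.basic S hS.1
  · rw [le_generateFrom_iff_subset_isOpen]
    intro S hS
    exact weakBasic_isOpen m d α hS

end Topology

/-! ### Completeness -/

section Complete

variable (m d : ℕ) (α : ℝ)

theorem holderComplete :
    @CompleteSpace (HolderMap m d α) (holderEMetric m d α).toUniformSpace := by
  letI : PseudoEMetricSpace (HolderMap m d α) := holderEMetric m d α
  apply EMetric.complete_of_cauchySeq_tendsto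
  intro u hu
  rw [EMetric.cauchySeq_iff] at hu
  have hedist : ∀ a b : HolderMap m d α, edist a b = hdist m d α a b := fun _ _ => rfl
  -- Step 1: Cauchy in every Hölder norm on balls
  have step1 : ∀ (n : ℕ) (δ : ℝ), 0 < δ → δ ≤ 1 → ∃ N, ∀ j ≥ N, ∀ k ≥ N,
      holderNorm α (Bn m n) ((u j).1 - (u k).1) < ENNReal.ofReal δ := by
    intro n δ hδ hδ1
    obtain ⟨N, hN⟩ := hu (2⁻¹ ^ n * ENNReal.ofReal δ)
      (ENNReal.mul_pos (by simp) (by simp [ENNReal.ofReal_pos, hδ]))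
    refine ⟨N, fun j hj k hk => ?_⟩
    have := hN j hj k hk
    rw [hedist] at this
    exact holderNorm_lt_of_hdist_lt m d α
      (by rw [← ENNReal.ofReal_one]; exact ENNReal.ofReal_le_ofReal hδ1) this
  -- Step 2: pointwise Cauchy, hence a pointwise limit
  have step2 : ∀ x : Euc m, ∃ z : Euc d,
      Filter.Tendsto (fun k => (u k).1 x) Filter.atTop (nhds z) := by
    intro x
    apply cauchySeq_tendsto_of_complete
    rw [Metric.cauchySeq_iff]
    intro δ hδ
    set δ' := min (δ / 2) 1 with hδ'
    have hδ'pos : 0 < δ' := lt_min (by linarith) one_pos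
    obtain ⟨N, hN⟩ := step1 ⌈‖x‖⌉₊ δ' hδ'pos (min_le_right _ _)
    have hx : x ∈ Bn m ⌈‖x‖⌉₊ := by
      simp only [Bn, Metric.mem_closedBall, dist_zero_right]
      exact Nat.le_ceil _
    refine ⟨N, fun j hj k hk => ?_⟩
    have h1 := hN j hj k hk
    have h2 : ENNReal.ofReal ‖((u j).1 - (u k).1) x‖ < ENNReal.ofReal δ' :=
      lt_of_le_of_lt (le_trans (le_supNormOn hx) supNormOn_le_holderNorm) h1
    have h3 : ‖(u j).1 x - (u k).1 x‖ < δ' := by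
      have := (ENNReal.ofReal_lt_ofReal_iff_of_nonneg (norm_nonneg _)).1 h2
      simpa [Pi.sub_apply] using this
    rw [dist_eq_norm]
    exact lt_of_lt_of_le h3 (le_trans (min_le_left _ _) (by linarith))
  choose fLim hfLim using step2
  -- Step 3: uniform closeness of the limit on balls
  have step3 : ∀ (n : ℕ) (δ : ℝ), 0 < δ → δ ≤ 1 → ∃ N, ∀ k ≥ N,
      holderNorm α (Bn m n) (fLim - (u k).1) ≤ ENNReal.ofReal (2 * δ) := by
    intro n δ hδ hδ1
    obtain ⟨N, hN⟩ := step1 n δ hδ hδ1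
    refine ⟨N, fun k hk => ?_⟩
    have hsup : supNormOn (Bn m n) (fLim - (u k).1) ≤ ENNReal.ofReal δ := by
      refine supNormOn_le_iff.2 fun x hx => ?_
      have hlim : Filter.Tendsto (fun j => ‖(u j).1 x - (u k).1 x‖)
          Filter.atTop (nhds ‖fLim x - (u k).1 x‖) :=
        ((hfLim x).sub tendsto_const_nhds).norm
      have hb : ‖fLim x - (u k).1 x‖ ≤ δ := by
        refine le_of_tendsto hlim (Filter.eventually_atTop.2 ⟨N, fun j hj => ?_⟩)
        have h2 : ENNReal.ofReal ‖((u j).1 - (u k).1) x‖ < ENNReal.ofReal δ :=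
          lt_of_le_of_lt (le_trans (le_supNormOn hx) supNormOn_le_holderNorm) (hN j hj k hk)
        have := (ENNReal.ofReal_lt_ofReal_iff_of_nonneg (norm_nonneg _)).1 h2
        simpa [Pi.sub_apply] using this.le
      apply ENNReal.ofReal_le_ofReal
      simpa [Pi.sub_apply] using hb
    have hsemi : holderSemi α (Bn m n) (fLim - (u k).1) ≤ ENNReal.ofReal δ := by
      refine holderSemi_le_iff.2 fun x hx y hy hxy => ?_
      have hp : (0:ℝ) < ‖x - y‖ ^ α :=
        Real.rpow_pos_of_pos (by simpa [sub_eq_zero] using hxy) _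
      have hlim : Filter.Tendsto
          (fun j => ‖((u j).1 x - (u k).1 x) - ((u j).1 y - (u k).1 y)‖ / ‖x - y‖ ^ α)
          Filter.atTop
          (nhds (‖(fLim x - (u k).1 x) - (fLim y - (u k).1 y)‖ / ‖x - y‖ ^ α)) := by
        apply Filter.Tendsto.div_const
        exact (((hfLim x).sub tendsto_const_nhds).sub
          ((hfLim y).sub tendsto_const_nhds)).norm
      have hb : ‖(fLim x - (u k).1 x) - (fLim y - (u k).1 y)‖ / ‖x - y‖ ^ α ≤ δ := by
        refine le_of_tendsto hlim (Filter.eventually_atTop.2 ⟨N, fun j hj => ?_⟩)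
        have h2 : ENNReal.ofReal (‖((u j).1 - (u k).1) x - ((u j).1 - (u k).1) y‖ / ‖x - y‖ ^ α)
            < ENNReal.ofReal δ :=
          lt_of_le_of_lt (le_trans (le_holderSemi hx hy hxy) holderSemi_le_holderNorm)
            (hN j hj k hk)
        have := (ENNReal.ofReal_lt_ofReal_iff_of_nonneg (by positivity)).1 h2
        simpa [Pi.sub_apply] using this.le
      apply ENNReal.ofReal_le_ofReal
      calc ‖(fLim - (u k).1) x - (fLim - (u k).1) y‖ / ‖x - y‖ ^ α
          = ‖(fLim x - (u k).1 x) - (fLim y - (u k).1 y)‖ / ‖x - y‖ ^ α := by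
            simp [Pi.sub_apply]
        _ ≤ δ := hb
    calc holderNorm α (Bn m n) (fLim - (u k).1)
        ≤ ENNReal.ofReal δ + ENNReal.ofReal δ := add_le_add hsup hsemi
      _ = ENNReal.ofReal (2 * δ) := by
          rw [← ENNReal.ofReal_add hδ.le hδ.le]; congr 1; ring
  -- Step 4: continuity of the limit
  have step4 : Continuous fLim := by
    rw [continuous_iff_continuousAt]
    intro x₀
    set n : ℕ := ⌈‖x₀‖⌉₊ + 1 with hn
    have hnhds : Bn m n ∈ nhds x₀ := by
      apply Metric.closedBall_mem_nhds_of_mem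
      simp only [Metric.mem_ball, dist_zero_right]
      calc ‖x₀‖ ≤ (⌈‖x₀‖⌉₊ : ℝ) := Nat.le_ceil _
        _ < ((⌈‖x₀‖⌉₊ + 1 : ℕ) : ℝ) := by exact_mod_cast Nat.lt_succ_self _
    have hunif : TendstoUniformlyOn (fun k x => (u k).1 x) fLim Filter.atTop (Bn m n) := by
      rw [Metric.tendstoUniformlyOn_iff]
      intro δ hδ
      set δ' := min (δ / 4) 1 with hδ'
      have hδ'pos : 0 < δ' := lt_min (by linarith) one_pos
      obtain ⟨N, hN⟩ := step3 n δ' hδ'pos (min_le_right _ _)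
      refine Filter.eventually_atTop.2 ⟨N, fun k hk x hx => ?_⟩
      have h1 : ENNReal.ofReal ‖(fLim - (u k).1) x‖ ≤ ENNReal.ofReal (2 * δ') :=
        le_trans (le_trans (le_supNormOn hx) supNormOn_le_holderNorm) (hN k hk)
      have h2 : ‖fLim x - (u k).1 x‖ ≤ 2 * δ' := by
        have := (ENNReal.ofReal_le_ofReal_iff (by positivity)).1 h1
        simpa [Pi.sub_apply] using this
      rw [dist_eq_norm]
      have : 2 * δ' < δ := by
        have : δ' ≤ δ / 4 := min_le_left _ _
        linarith
      linarith
    have hcont : ContinuousOn fLim (Bn m n) :=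
      hunif.continuousOn (Filter.Eventually.of_forall fun k => (u k).2.1.continuousOn).frequently
    exact hcont.continuousAt hnhds
  -- Step 5: the limit has finite Hölder seminorm on compacts
  have step5 : ∀ K : Set (Euc m), IsCompact K → holderSemi α K fLim < ⊤ := by
    intro K hK
    obtain ⟨n, hn⟩ := exists_nat_subset_Bn m hK
    obtain ⟨N, hN⟩ := step3 n 1 one_pos le_rfl
    have hdecomp : fLim = (fLim - (u N).1) + (u N).1 := by abel
    calc holderSemi α K fLim ≤ holderSemi α (Bn m n) fLim := holderSemi_mono hn
      _ ≤ holderSemi α (Bn m n) (fLim - (u N).1) + holderSemi α (Bn m n) (u N).1 := by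
          nth_rewrite 1 [hdecomp]; exact holderSemi_add_le
      _ < ⊤ := by
          apply ENNReal.add_lt_top.2
          constructor
          · exact lt_of_le_of_lt
              (le_trans holderSemi_le_holderNorm (hN N le_rfl)) ENNReal.ofReal_lt_top
          · exact (u N).2.2 (Bn m n) (isCompact_Bn m n)
  set fL : HolderMap m d α := ⟨fLim, step4, step5⟩ with hfL
  refine ⟨fL, ?_⟩
  rw [EMetric.tendsto_atTop]
  intro ε hε
  obtain ⟨n₀, δ, hδpos, hδ1, hkey⟩ := exists_n_delta m d α hε
  obtain ⟨N, hN⟩ := step3 n₀ δ hδpos hδ1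
  refine ⟨N, fun k hk => ?_⟩
  rw [hedist]
  apply hkey
  rw [holderNorm_sub_comm]
  exact hN k hk

end Complete

/-- the space of continuous maps `ℝ^m → ℝ^d` with locally finite `α`-Hölder
seminorm, endowed with the weak `α`-Hölder–Whitney topology, is a Baire space. -/
theorem statement1 (m d : ℕ) (hm : 1 ≤ m) (hd : 1 ≤ d) (α : ℝ) (hα : α ∈ Set.Ioc (0:ℝ) 1) :
    @BaireSpace (HolderMap m d α) (generateFrom (weakBasic m d α)) := by
  rw [topEq m d α]
  exact @BaireSpace.of_completelyPseudoMetrizable _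
    (holderEMetric m d α).toUniformSpace.toTopologicalSpace
    (@IsCompletelyPseudoMetrizableSpace.of_completeSpace_pseudometrizable _
    (holderEMetric m d α).toUniformSpace (holderComplete m d α)
    (@EMetric.instIsCountablyGeneratedUniformity _ (holderEMetric m d α)))
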